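/- Let V be a finite-dimensional vector space over 𝔽₂ with a distinguished basis C, and let ∂ : V → V be a linear map with ∂ ∘ ∂ = 0. For a subset I ⊆ C write S_I = Σ_{ν ∈ I} ν ∈ V. Call a family of subsets I₁, …, I_d ⊆ C a homology basis if each S_{I_j} lies in ker ∂ and the classes [S_{I_1}], …, [S_{I_d}] form a basis of ker ∂ / im ∂. Call the family minimal if for every j and every proper nonempty subset I′ ⊊ I_j, replacing S_{I_j} by S_{I′} does not yield a homology basis. Then in a minimal homology basis, every S_{I_j} is a minimal cycle, i.e., no proper nonempty subset I′ ⊊ I_j satisfies ∂S_{I′} = 0. -/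

import Mathlib

/-- The family of subsets `I₁, …, I_d` of the distinguished basis is a homology basis: each
`S_{I_j}` is a cycle, the classes span the homology `ker ∂ / im ∂`, and they are linearly
independent modulo boundaries. -/
def IsHomologyBasis {ι V : Type} [Fintype ι] [AddCommGroup V] [Module (ZMod 2) V]
    (bd : V →ₗ[ZMod 2] V) (b : Module.Basis ι (ZMod 2) V) {d : ℕ} (I : Fin d → Finset ι) : Prop :=
  (∀ j, bd (∑ i ∈ I j, b i) = 0) ∧
  (∀ z : V, bd z = 0 → ∃ c : Fin d → ZMod 2,
      z - ∑ j, c j • (∑ i ∈ I j, b i) ∈ LinearMap.range bd) ∧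
  (∀ c : Fin d → ZMod 2,
      (∑ j, c j • (∑ i ∈ I j, b i)) ∈ LinearMap.range bd → c = 0)

section Aux

variable {ι V : Type} [Fintype ι] [DecidableEq ι] [AddCommGroup V] [Module (ZMod 2) V]

lemma sum_update_smul {d : ℕ} (j : Fin d) (S : Fin d → V) (T : V) (a : Fin d → ZMod 2) :
    ∑ k, a k • (Function.update S j T k)
      = a j • T + ∑ k ∈ Finset.univ.erase j, a k • S k := by
  rw [← Finset.add_sum_erase _ (fun k => a k • Function.update S j T k) (Finset.mem_univ j)]
  congr 1
  · simp
  · exact Finset.sum_congr rfl fun k hk => by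
      rw [Function.update_of_ne (Finset.ne_of_mem_erase hk)]

lemma replace_basis {d : ℕ} (bd : V →ₗ[ZMod 2] V) (b : Module.Basis ι (ZMod 2) V)
    (I : Fin d → Finset ι) (hbasis : IsHomologyBasis bd b I)
    (j : Fin d) (J : Finset ι)
    (hcycle : bd (∑ i ∈ J, b i) = 0)
    (c : Fin d → ZMod 2)
    (hc : (∑ i ∈ J, b i) - ∑ k, c k • (∑ i ∈ I k, b i) ∈ LinearMap.range bd)
    (hcj : c j = 1) : IsHomologyBasis bd b (Function.update I j J) := by
  obtain ⟨h1, h2, h3⟩ := hbasis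
  set S : Fin d → V := fun k => ∑ i ∈ I k, b i with hS
  set T : V := ∑ i ∈ J, b i with hT
  obtain ⟨r, hr⟩ := hc
  have hSup : ∀ k, (∑ i ∈ Function.update I j J k, b i) = Function.update S j T k := by
    intro k
    by_cases h : k = j
    · subst h; simp [hT]
    · rw [Function.update_of_ne h, Function.update_of_ne h]
  have hT2 : T = bd r + (S j + ∑ k ∈ Finset.univ.erase j, c k • S k) := by
    have h5 : c j • S j + ∑ k ∈ Finset.univ.erase j, c k • S k = ∑ k, c k • S k :=
      Finset.add_sum_erase _ (fun k => c k • S k) (Finset.mem_univ j)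
    rw [hcj, one_smul] at h5
    rw [h5, hr]
    abel
  have key : ∀ a : Fin d → ZMod 2, ∑ k, a k • Function.update S j T k
      = a j • bd r + ∑ k, (if k = j then a j else a k + a j * c k) • S k := by
    intro a
    rw [sum_update_smul j S T a,
      ← Finset.add_sum_erase _ (fun k => (if k = j then a j else a k + a j * c k) • S k)
        (Finset.mem_univ j)]
    simp only [if_pos rfl, if_true]
    have h4 : ∑ k ∈ Finset.univ.erase j, (if k = j then a j else a k + a j * c k) • S k
        = ∑ k ∈ Finset.univ.erase j, (a k • S k + a j • (c k • S k)) := by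
      refine Finset.sum_congr rfl fun k hk => ?_
      rw [if_neg (Finset.ne_of_mem_erase hk), add_smul, mul_smul]
    rw [h4, Finset.sum_add_distrib, ← Finset.smul_sum, hT2]
    simp only [smul_add]
    abel
  refine ⟨?_, ?_, ?_⟩
  · intro k
    rw [hSup]
    by_cases h : k = j
    · subst h; simpa [hT] using hcycle
    · rw [Function.update_of_ne h]; exact h1 k
  · intro z hz
    obtain ⟨a, ha⟩ := h2 z hz
    refine ⟨fun k => if k = j then a j else a k - a j * c k, ?_⟩
    simp only [hSup]
    have heq : ∑ k, (if k = j then a j else a k - a j * c k) • Function.update S j T k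
        = a j • bd r + ∑ k, a k • S k := by
      rw [key (fun k => if k = j then a j else a k - a j * c k)]
      simp only [if_pos rfl]
      congr 1
      refine Finset.sum_congr rfl fun k _ => ?_
      by_cases h : k = j
      · subst h; simp
      · simp only [if_neg h, if_true]
        module
    rw [heq]
    have : z - (a j • bd r + ∑ k, a k • S k)
        = (z - ∑ k, a k • S k) - a j • bd r := by abel
    rw [this]
    exact sub_mem ha (Submodule.smul_mem _ _ ⟨r, rfl⟩)
  · intro a hmem
    simp only [hSup] at hmem
    rw [key a] at hmem
    have hmem2 : ∑ k, (if k = j then a j else a k + a j * c k) • S k ∈ LinearMap.range bd := by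
      have : ∑ k, (if k = j then a j else a k + a j * c k) • S k
          = (a j • bd r + ∑ k, (if k = j then a j else a k + a j * c k) • S k) - a j • bd r := by
        abel
      rw [this]
      exact sub_mem hmem (Submodule.smul_mem _ _ ⟨r, rfl⟩)
    have hz := h3 _ hmem2
    have haj : a j = 0 := by
      have := congrFun hz j
      simpa using this
    funext k
    have := congrFun hz k
    by_cases h : k = j
    · subst h; exact haj
    · simp only [if_neg h, haj, zero_mul, add_zero] at this
      simpa using this

end Aux

/-- In a minimal homology basis over `𝔽₂`, every `S_{I_j}` is a minimal cycle: no proper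
nonempty subset `I′ ⊊ I_j` has `∂S_{I′} = 0`. -/
theorem stmt18 {ι V : Type} [Fintype ι] [DecidableEq ι]
    [AddCommGroup V] [Module (ZMod 2) V]
    (b : Module.Basis ι (ZMod 2) V)
    (bd : V →ₗ[ZMod 2] V) (hbd : bd ∘ₗ bd = 0)
    (d : ℕ) (I : Fin d → Finset ι)
    (hbasis : IsHomologyBasis bd b I)
    (hmin : ∀ j : Fin d, ∀ I' : Finset ι, I' ⊂ I j → I'.Nonempty →
      ¬ IsHomologyBasis bd b (Function.update I j I')) :
    ∀ j : Fin d, ∀ I' : Finset ι, I' ⊂ I j → I'.Nonempty →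
      bd (∑ i ∈ I', b i) ≠ 0 := by
  intro j I' hsub hne hcyc
  obtain ⟨c, hc⟩ := hbasis.2.1 _ hcyc
  by_cases hcj : c j = 0
  · set J := I j \ I' with hJ
    have hJsub : J ⊂ I j := Finset.sdiff_ssubset hsub.1 hne
    have hJne : J.Nonempty := by
      rw [hJ, Finset.sdiff_nonempty]
      exact fun h => hsub.2 h
    have hsum : (∑ i ∈ J, b i) + ∑ i ∈ I', b i = ∑ i ∈ I j, b i :=
      Finset.sum_sdiff hsub.1
    have hJcyc : bd (∑ i ∈ J, b i) = 0 := by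
      have : bd ((∑ i ∈ J, b i) + ∑ i ∈ I', b i) = 0 := by
        rw [hsum]; exact hbasis.1 j
      rw [map_add, hcyc, add_zero] at this
      exact this
    refine hmin j J hJsub hJne (replace_basis bd b I hbasis j J hJcyc
      (fun k => if k = j then 1 else c k) ?_ (by simp))
    have herase : ∑ k ∈ Finset.univ.erase j, (if k = j then (1:ZMod 2) else c k) • ∑ i ∈ I k, b i
        = ∑ k ∈ Finset.univ.erase j, c k • ∑ i ∈ I k, b i :=
      Finset.sum_congr rfl fun k hk => by rw [if_neg (Finset.ne_of_mem_erase hk)]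
    have hsplit : ∑ k, (if k = j then 1 else c k) • (∑ i ∈ I k, b i)
        = (∑ i ∈ I j, b i) + ∑ k, c k • (∑ i ∈ I k, b i) := by
      rw [← Finset.add_sum_erase _ (fun k => (if k = j then (1:ZMod 2) else c k) • ∑ i ∈ I k, b i)
        (Finset.mem_univ j), if_pos rfl, one_smul, herase,
        ← Finset.add_sum_erase _ (fun k => c k • ∑ i ∈ I k, b i) (Finset.mem_univ j),
        hcj, zero_smul, zero_add]
    rw [hsplit]
    have h2x : ∀ x : V, x + x = 0 := fun x => by
      rw [← two_smul (ZMod 2) x, show (2 : ZMod 2) = 0 by decide, zero_smul]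
    have hneg : ∀ x : V, -x = x := fun x => neg_eq_of_add_eq_zero_right (h2x x)
    have hsub' : ∀ x y : V, x - y = x + y := fun x y => by rw [sub_eq_add_neg, hneg]
    have : (∑ i ∈ J, b i) - ((∑ i ∈ I j, b i) + ∑ k, c k • (∑ i ∈ I k, b i))
        = (∑ i ∈ I', b i) - ∑ k, c k • (∑ i ∈ I k, b i) := by
      rw [hsub', hsub', ← hsum, ← add_assoc, ← add_assoc, h2x, zero_add]
    rw [this]
    exact hc
  · have hcj1 : c j = 1 := by
      have h2 : ∀ x : ZMod 2, x ≠ 0 → x = 1 := by decide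
      exact h2 _ hcj
    exact hmin j I' hsub hne (replace_basis bd b I hbasis j I' hcyc c hc hcj1)
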